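/- Let s ≥ 2 and n ≥ 2 be integers. If G is a connected simple graph with n vertices such that d(u) + d(v) ≥ n - s + 1 for each pair of distinct non-adjacent vertices u and v, then G contains a spanning tree with at most s leaves. -/

import Mathlib

open scoped Classical

namespace STFL
open SimpleGraph List Finset

variable {V : Type*} [Fintype V] {G : SimpleGraph V}

omit [Fintype V] in
lemma edge_le_of_adj {x y : V} (h : G.Adj x y) : SimpleGraph.edge x y ≤ G := by
  intro a b hab
  rw [edge_adj] at hab
  rcases hab.1 with ⟨rfl, rfl⟩ | ⟨rfl, rfl⟩
  · exact h
  · exact h.symm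

omit [Fintype V] in
/-- Adding a pendant edge to an acyclic graph keeps it acyclic. -/
lemma pendant_acyclic {T : SimpleGraph V} {x y : V} (hT : T.IsAcyclic)
    (hiso : ∀ b, ¬ T.Adj x b) (hxy : x ≠ y) :
    (T ⊔ SimpleGraph.edge x y).IsAcyclic := by
  intro v c hc
  by_cases hmem : s(x, y) ∈ c.edges
  · -- rotate the cycle to start at x
    have hx : x ∈ c.support := Walk.fst_mem_support_of_mem_edges c hmem
    have hc' : (c.rotate x hx).IsCycle := hc.rotate hx
    set c' := c.rotate x hx with hc'def
    cases hcc : c' with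
    | nil => rw [hcc] at hc'; exact Walk.IsCycle.not_of_nil hc'
    | cons h q =>
      rw [hcc] at hc'
      rename_i u
      have hu : u = y := by
        rcases h with hT' | he
        · exact absurd hT' (hiso u)
        · rw [edge_adj] at he
          rcases he.1 with ⟨_, rfl⟩ | ⟨rfl, _⟩
          · rfl
          · exact absurd rfl hxy
      rw [Walk.cons_isCycle_iff] at hc'
      obtain ⟨hq, hnotq⟩ := hc'
      have hsxy : s(x, y) = s(x, u) := by rw [hu]
      have hnotq2 : s(x, y) ∉ q.edges := fun hm2 => hnotq (hsxy ▸ hm2)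
      have hxu : x ≠ u := by rw [hu]; exact hxy
      have hqT : ∀ e ∈ q.edges, e ∈ T.edgeSet := by
        intro e he
        have := q.edges_subset_edgeSet he
        rw [edgeSet_sup, edge_edgeSet_of_ne hxy] at this
        rcases this with h1 | h1
        · exact h1
        · exact absurd (h1 ▸ he) hnotq2
      have q' : T.Walk u x := q.transfer T hqT
      have : ∃ w, T.Adj x w := by
        obtain ⟨w, hadj, _, _⟩ := Walk.exists_eq_cons_of_ne hxu q'.reverse
        exact ⟨w, hadj⟩
      obtain ⟨w, hw⟩ := this
      exact hiso w hw
  · -- cycle avoids the new edge, so it lives in T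
    have hcT : ∀ e ∈ c.edges, e ∈ T.edgeSet := by
      intro e he
      have := c.edges_subset_edgeSet he
      rw [edgeSet_sup, edge_edgeSet_of_ne hxy] at this
      rcases this with h1 | h1
      · exact h1
      · exact absurd (h1 ▸ he) hmem
    exact hT (c.transfer T hcT) (hc.transfer hcT)

/-- Grow a connected acyclic subgraph on a vertex set `C` into a spanning tree. -/
lemma grow (hconn : G.Connected) :
    ∀ (k : ℕ) (C : Finset V) (T : SimpleGraph V), C.Nonempty → T ≤ G →
    (∀ a b, T.Adj a b → a ∈ C) →
    (∀ a ∈ C, ∀ b ∈ C, T.Reachable a b) → T.IsAcyclic →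
    (Finset.univ \ C).card = k →
    ∃ T' : SimpleGraph V, T ≤ T' ∧ T' ≤ G ∧ T'.IsTree := by
  intro k
  induction k with
  | zero =>
    intro C T hCne hTG hin hreach hacyc hcard
    have hsub : Finset.univ \ C = ∅ := Finset.card_eq_zero.mp hcard
    have hCuniv : C = Finset.univ := by
      refine Finset.eq_univ_iff_forall.mpr fun v => ?_
      by_contra hv
      have : v ∈ Finset.univ \ C := Finset.mem_sdiff.mpr ⟨Finset.mem_univ v, hv⟩
      rw [hsub] at this
      exact absurd this (Finset.notMem_empty v)
    refine ⟨T, le_refl _, hTG, ?_⟩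
    rw [isTree_iff]
    refine ⟨?_, hacyc⟩
    rw [connected_iff]
    constructor
    · intro u w
      exact hreach u (hCuniv ▸ Finset.mem_univ u) w (hCuniv ▸ Finset.mem_univ w)
    · exact ⟨hCne.choose⟩
  | succ k ih =>
    intro C T hCne hTG hin hreach hacyc hcard
    have hne : (Finset.univ \ C).Nonempty := by
      rw [← Finset.card_pos, hcard]; omega
    obtain ⟨w, hw⟩ := hne
    rw [Finset.mem_sdiff] at hw
    obtain ⟨c0, hc0⟩ := hCne
    have hreach0 : G.Reachable w c0 := hconn.preconnected w c0
    obtain ⟨p⟩ := hreach0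
    obtain ⟨d, hd, hd1, hd2⟩ := p.exists_boundary_dart {z | z ∉ C} hw.2 (by simp [hc0])
    set x := d.toProd.1
    set y := d.toProd.2
    have hadj : G.Adj x y := d.adj
    have hxC : x ∉ C := hd1
    have hyC : y ∈ C := by simpa using hd2
    have hxy : x ≠ y := hadj.ne
    have hiso : ∀ b, ¬ T.Adj x b := fun b hb => hxC (hin x b hb)
    set T₂ := T ⊔ SimpleGraph.edge x y with hT₂
    have hstep : ∃ T' : SimpleGraph V, T₂ ≤ T' ∧ T' ≤ G ∧ T'.IsTree := by
      apply ih (insert x C) T₂ ⟨x, Finset.mem_insert_self x C⟩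
      · exact sup_le hTG (edge_le_of_adj hadj)
      · intro a b hab
        rcases hab with h1 | h1
        · exact Finset.mem_insert_of_mem (hin a b h1)
        · rw [edge_adj] at h1
          rcases h1.1 with ⟨rfl, rfl⟩ | ⟨rfl, rfl⟩
          · exact Finset.mem_insert_self _ _
          · exact Finset.mem_insert_of_mem hyC
      · have hxyr : T₂.Reachable x y := (by exact Or.inr (by rw [edge_adj]; exact ⟨Or.inl ⟨rfl, rfl⟩, hxy⟩) : T₂.Adj x y).reachable
        have hmono : ∀ a b, T.Reachable a b → T₂.Reachable a b := fun a b h =>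
          h.mono le_sup_left
        intro a ha b hb
        rcases Finset.mem_insert.mp ha with rfl | ha' <;>
          rcases Finset.mem_insert.mp hb with rfl | hb'
        · exact Reachable.refl _
        · exact hxyr.trans (hmono _ _ (hreach y hyC b hb'))
        · exact (hmono _ _ (hreach a ha' y hyC)).trans hxyr.symm
        · exact hmono _ _ (hreach a ha' b hb')
      · exact pendant_acyclic hacyc hiso hxy
      · rw [Finset.sdiff_insert, Finset.card_erase_of_mem
          (Finset.mem_sdiff.mpr ⟨Finset.mem_univ x, hxC⟩), hcard]
        omega
    obtain ⟨T', h1, h2, h3⟩ := hstep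
    exact ⟨T', le_trans le_sup_left h1, h2, h3⟩

/-- A path (as a list) extends to an acyclic connected-on-its-support subgraph. -/
lemma path_subgraph :
    ∀ (l : List V), l ≠ [] → l.Nodup → l.Chain' G.Adj →
    ∃ T : SimpleGraph V, T ≤ G ∧ (∀ a b, T.Adj a b → a ∈ l.toFinset) ∧
      (∀ a ∈ l.toFinset, ∀ b ∈ l.toFinset, T.Reachable a b) ∧ T.IsAcyclic ∧
      l.Chain' T.Adj := by
  intro l
  induction l with
  | nil => intro h; exact absurd rfl h
  | cons hd tl ih =>
    intro _ hnodup hchain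
    cases tl with
    | nil =>
      refine ⟨⊥, bot_le, by simp, ?_, ?_, List.isChain_singleton _⟩
      · intro a ha b hb
        simp only [toFinset_cons, toFinset_nil, LawfulSingleton.insert_empty_eq, Finset.mem_singleton] at ha hb
        subst ha; subst hb; exact Reachable.refl _
      · exact isAcyclic_bot
    | cons hd2 tl2 =>
      have hnodup' : (hd2 :: tl2).Nodup := hnodup.of_cons
      have hchain' : (hd2 :: tl2).Chain' G.Adj := hchain.tail
      obtain ⟨T, hTG, hin, hreach, hacyc, hchT⟩ := ih (by simp) hnodup' hchain'
      have hadj : G.Adj hd hd2 := (List.isChain_cons_cons.mp hchain).1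
      have hhd : hd ∉ (hd2 :: tl2).toFinset := by
        simp only [List.mem_toFinset]
        exact (List.nodup_cons.mp hnodup).1
      have hiso : ∀ b, ¬ T.Adj hd b := fun b hb => hhd (hin hd b hb)
      have hne : hd ≠ hd2 := hadj.ne
      set T₂ := T ⊔ SimpleGraph.edge hd hd2 with hT₂
      have hadj2 : T₂.Adj hd hd2 := Or.inr (by rw [edge_adj]; exact ⟨Or.inl ⟨rfl, rfl⟩, hne⟩)
      refine ⟨T₂, sup_le hTG (edge_le_of_adj hadj), ?_, ?_, ?_, ?_⟩
      · intro a b hab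
        simp only [toFinset_cons]
        rcases hab with h1 | h1
        · exact Finset.mem_insert_of_mem (by simpa using hin a b h1)
        · rw [edge_adj] at h1
          rcases h1.1 with ⟨rfl, rfl⟩ | ⟨rfl, rfl⟩
          · exact Finset.mem_insert_self _ _
          · exact Finset.mem_insert_of_mem (by simp)
      · have hmono : ∀ a b, T.Reachable a b → T₂.Reachable a b := fun a b h =>
          h.mono le_sup_left
        have hhd2mem : hd2 ∈ (hd2 :: tl2).toFinset := by simp
        intro a ha b hb
        rw [List.toFinset_cons, Finset.mem_insert] at ha hb
        rcases ha with rfl | ha' <;> rcases hb with rfl | hb'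
        · exact Reachable.refl _
        · exact hadj2.reachable.trans (hmono _ _ (hreach hd2 hhd2mem b hb'))
        · exact (hmono _ _ (hreach a ha' hd2 hhd2mem)).trans hadj2.reachable.symm
        · exact hmono _ _ (hreach a ha' b hb')
      · exact pendant_acyclic hacyc hiso hne
      · exact List.isChain_cons_cons.mpr ⟨hadj2, hchT.imp (fun a b h => le_sup_left (b := SimpleGraph.edge hd hd2) h)⟩

/-- Main construction: a spanning tree containing a given path. -/
lemma exists_tree_of_path (hconn : G.Connected) (l : List V) (hne : l ≠ [])
    (hnodup : l.Nodup) (hchain : l.Chain' G.Adj) :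
    ∃ T : SimpleGraph V, T ≤ G ∧ T.IsTree ∧ l.Chain' T.Adj := by
  obtain ⟨T, hTG, hin, hreach, hacyc, hchT⟩ := path_subgraph l hne hnodup hchain
  have hCne : l.toFinset.Nonempty := by
    cases l with
    | nil => exact absurd rfl hne
    | cons a t => exact ⟨a, by simp⟩
  obtain ⟨T', hTT', hT'G, hT'tree⟩ := grow hconn _ l.toFinset T hCne hTG hin hreach hacyc rfl
  exact ⟨T', hT'G, hT'tree, hchT.imp (fun a b h => hTT' h)⟩

omit [Fintype V] in
/-- Rotating a "cycle list" preserves the chain property. -/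
lemma chain_rotate {R : V → V → Prop} {u v : List V} {x : V}
    (hc : List.Chain' R (u ++ x :: v))
    (hlast : R ((u ++ x :: v).getLast (by simp)) ((u ++ x :: v).head (by simp))) :
    List.Chain' R ((x :: v) ++ u) := by
  rcases List.isChain_append.mp hc with ⟨hu, hxv, hj⟩
  refine List.isChain_append.mpr ⟨hxv, hu, ?_⟩
  intro p hp q hq
  cases u with
  | nil => simp at hq
  | cons b0 u' =>
    have hq' : q = b0 := by
      simp only [List.head?_cons, Option.mem_def, Option.some_inj] at hq
      exact hq.symm
    have hp' : p = (x :: v).getLast (by simp) := by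
      rw [List.getLast?_eq_getLast (by simp), Option.mem_def, Option.some_inj] at hp
      exact hp.symm
    have h1 : ((b0 :: u') ++ x :: v).getLast (by simp) = (x :: v).getLast (by simp) :=
      List.getLast_append_of_ne_nil _ (by simp)
    have h2 : ((b0 :: u') ++ x :: v).head (by simp) = b0 := rfl
    rw [h1, h2] at hlast
    rw [hp', hq']
    exact hlast

end STFL

open STFL List Finset SimpleGraph in
theorem spanning_tree_few_leaves
    {V : Type*} [Fintype V] (n s : ℕ) (hs : 2 ≤ s) (hn : 2 ≤ n)
    (hcard : Fintype.card V = n)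
    (G : SimpleGraph V) (hconn : G.Connected)
    (hdeg : ∀ u v : V, u ≠ v → ¬ G.Adj u v →
      (n : ℤ) - s + 1 ≤ (G.degree u : ℤ) + (G.degree v : ℤ)) :
    ∃ T : SimpleGraph V, T ≤ G ∧ T.IsTree ∧
      (Finset.univ.filter (fun v : V => T.degree v = 1)).card ≤ s := by
  classical
  have hVne : Nonempty V := by
    rw [← Fintype.card_pos_iff, hcard]; omega
  obtain ⟨v0⟩ := hVne
  -- a longest path, as a list
  set Q : ℕ → Prop := fun k => ∃ l : List V, l.Chain' G.Adj ∧ l.Nodup ∧ l.length = k with hQ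
  have hQ1 : Q 1 := ⟨[v0], List.isChain_singleton _, by simp, rfl⟩
  set m := Nat.findGreatest Q n with hm
  have hQm : Q m := Nat.findGreatest_spec (by omega) hQ1
  have hm1 : 1 ≤ m := Nat.le_findGreatest (by omega) hQ1
  have hmax : ∀ l' : List V, l'.Chain' G.Adj → l'.Nodup → l'.length ≤ m := by
    intro l' hc hnd
    by_contra hgt
    push_neg at hgt
    exact Nat.findGreatest_is_greatest hgt (by rw [← hcard]; exact hnd.length_le_card)
      ⟨l', hc, hnd, rfl⟩
  obtain ⟨l, hchain, hnodup, hlen⟩ := hQm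
  have hne : l ≠ [] := by
    intro h; rw [h] at hlen; simp at hlen; omega
  set a := l.head hne with ha
  set b := l.getLast hne with hb
  set f : ℕ → V := fun i => l.getD i a with hf
  have hmn : m ≤ n := by rw [← hlen, ← hcard]; exact hnodup.length_le_card
  have hlpos : 0 < l.length := by rw [hlen]; omega
  -- basic facts about f
  have hfget : ∀ i (h : i < m), f i = l[i]'(by rw [hlen]; exact h) := by
    intro i h
    exact List.getD_eq_getElem l a (by rw [hlen]; exact h)
  have hmemf : ∀ i, i < m → f i ∈ l.toFinset := by
    intro i h
    rw [List.mem_toFinset, hfget i h]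
    exact List.getElem_mem _
  have hinj : ∀ i j, i < m → j < m → f i = f j → i = j := by
    intro i j hi hj hij
    rw [hfget i hi, hfget j hj] at hij
    exact (hnodup.getElem_inj_iff).mp hij
  have hsurj : ∀ w ∈ l.toFinset, ∃ i, i < m ∧ f i = w := by
    intro w hw
    rw [List.mem_toFinset, List.mem_iff_getElem] at hw
    obtain ⟨i, hi, hiw⟩ := hw
    exact ⟨i, by rw [← hlen]; exact hi, by rw [hfget i (by rw [← hlen]; exact hi)]; exact hiw⟩
  have hf0 : f 0 = a := by
    rw [hfget 0 (by omega), ha, List.head_eq_getElem]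
  have hfb : f (m - 1) = b := by
    rw [hfget (m-1) (by omega), hb, List.getLast_eq_getElem]
    congr 1
    omega
  have hadjf : ∀ i, i + 1 < m → G.Adj (f i) (f (i+1)) := by
    intro i hi
    rw [hfget i (by omega), hfget (i+1) hi]
    have := List.isChain_iff_getElem.mp hchain i (by rw [hlen]; omega)
    simpa [List.get_eq_getElem] using this
  -- endpoints have all neighbors on the path
  have hHa : ∀ w, G.Adj a w → w ∈ l.toFinset := by
    intro w hw
    by_contra hwl
    have hch : (w :: l).Chain' G.Adj := by
      rw [List.Chain', List.isChain_cons]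
      refine ⟨?_, hchain⟩
      intro y hy
      rw [List.head?_eq_head hne, Option.mem_def, Option.some_inj] at hy
      rw [← hy] at *
      exact hw.symm
    have hnd : (w :: l).Nodup := by
      rw [List.nodup_cons]
      exact ⟨fun hmem => hwl (List.mem_toFinset.mpr hmem), hnodup⟩
    have := hmax _ hch hnd
    simp only [List.length_cons, hlen] at this
    omega
  have hHb : ∀ w, G.Adj b w → w ∈ l.toFinset := by
    intro w hw
    by_contra hwl
    have hchrev : l.reverse.Chain' G.Adj :=
      List.isChain_reverse.mpr (hchain.imp (fun x y h => h.symm))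
    have hch : (w :: l.reverse).Chain' G.Adj := by
      rw [List.Chain', List.isChain_cons]
      refine ⟨?_, hchrev⟩
      intro y hy
      rw [List.head?_reverse, List.getLast?_eq_getLast hne, Option.mem_def,
        Option.some_inj] at hy
      rw [← hy] at *
      exact hw.symm
    have hnd : (w :: l.reverse).Nodup := by
      rw [List.nodup_cons, List.nodup_reverse]
      exact ⟨fun hmem => hwl (List.mem_toFinset.mpr (List.mem_reverse.mp hmem)), hnodup⟩
    have := hmax _ hch hnd
    simp only [List.length_cons, List.length_reverse, hlen] at this
    omega
  -- m ≥ 2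
  have hm2 : 2 ≤ m := by
    by_contra hlt
    have hm1' : m = 1 := by omega
    have hamem : a ∈ l.toFinset := List.mem_toFinset.mpr (List.head_mem hne)
    have hcardl : l.toFinset.card = 1 := by
      rw [List.toFinset_card_of_nodup hnodup, hlen, hm1']
    have hsingle : l.toFinset = {a} := by
      obtain ⟨x, hx⟩ := Finset.card_eq_one.mp hcardl
      rw [hx] at hamem ⊢
      rw [Finset.mem_singleton] at hamem
      rw [hamem]
    obtain ⟨w, hwne⟩ := Fintype.exists_ne_of_one_lt_card (by omega) a
    obtain ⟨p⟩ := hconn.preconnected a w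
    obtain ⟨u, hadj, _, _⟩ := SimpleGraph.Walk.exists_eq_cons_of_ne (Ne.symm hwne) p
    have hu := hHa u hadj
    rw [hsingle, Finset.mem_singleton] at hu
    rw [hu] at hadj
    exact G.irrefl hadj
  -- key inequality : n + 2 ≤ m + s
  have hkey : n + 2 ≤ m + s := by
    rcases eq_or_lt_of_le hmn with heq | hlt
    · omega
    · -- m < n : Ore-type argument
      -- no "cycle" on the vertex set of l
      have hcyc : ∀ (c : List V) (hcne : c ≠ []), c.Chain' G.Adj → c.Nodup →
          c.toFinset = l.toFinset → G.Adj (c.getLast hcne) (c.head hcne) → False := by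
        intro c hcne hcchain hcnodup hcfin hcadj
        have hclen : c.length = m := by
          rw [← List.toFinset_card_of_nodup hcnodup, hcfin,
            List.toFinset_card_of_nodup hnodup, hlen]
        obtain ⟨w, hwl⟩ : ∃ w, w ∉ l.toFinset := by
          by_contra hall
          push_neg at hall
          have : (Finset.univ : Finset V) ⊆ l.toFinset := fun z _ => hall z
          have := Finset.card_le_card this
          rw [Finset.card_univ, hcard, List.toFinset_card_of_nodup hnodup, hlen] at this
          omega
        obtain ⟨p⟩ := hconn.preconnected w (c.head hcne)
        have hheadc : c.head hcne ∈ c.toFinset := List.mem_toFinset.mpr (List.head_mem hcne)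
        obtain ⟨d, hd, hd1, hd2⟩ := p.exists_boundary_dart {z | z ∉ c.toFinset}
          (by simpa [hcfin] using hwl) (by simpa using hheadc)
        have hzc : d.toProd.2 ∈ c := by
          have : d.toProd.2 ∈ c.toFinset := by simpa using hd2
          exact List.mem_toFinset.mp this
        obtain ⟨u', v', rfl⟩ := List.mem_iff_append.mp hzc
        set z := d.toProd.2
        have hrot : List.Chain' G.Adj ((z :: v') ++ u') :=
          chain_rotate hcchain hcadj
        have hperm : ((z :: v') ++ u').Perm (u' ++ z :: v') := List.perm_append_comm
        have hrotnodup : ((z :: v') ++ u').Nodup := hperm.nodup_iff.mpr hcnodup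
        have hx'notin : d.toProd.1 ∉ (z :: v') ++ u' := by
          intro hmem
          have : d.toProd.1 ∈ u' ++ z :: v' := hperm.mem_iff.mp hmem
          exact hd1 (List.mem_toFinset.mpr this)
        have hch : (d.toProd.1 :: ((z :: v') ++ u')).Chain' G.Adj := by
          rw [List.Chain', List.isChain_cons]
          refine ⟨?_, hrot⟩
          intro y hy
          simp only [List.cons_append, List.head?_cons, Option.mem_def, Option.some_inj] at hy
          rw [← hy]
          exact d.adj
        have hnd : (d.toProd.1 :: ((z :: v') ++ u')).Nodup :=
          List.nodup_cons.mpr ⟨hx'notin, hrotnodup⟩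
        have := hmax _ hch hnd
        have hlen2 : ((z :: v') ++ u').length = (u' ++ z :: v').length := hperm.length_eq
        simp only [List.length_cons, hlen2, hclen] at this
        omega
      -- no crossing chords
      have hcross : ∀ i, i + 1 < m → G.Adj b (f i) → G.Adj a (f (i+1)) → False := by
        intro i hi hbfi hafi
        set tk := l.take (i+1) with htk
        set dr := l.drop (i+1) with hdr
        have htklen : tk.length = i + 1 := by
          rw [htk, List.length_take, hlen]; omega
        have hdrlen : dr.length = m - (i+1) := by
          rw [hdr, List.length_drop, hlen]
        have htkne : tk ≠ [] := List.ne_nil_of_length_pos (by omega)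
        have hdrne : dr ≠ [] := List.ne_nil_of_length_pos (by omega)
        have htkrevne : tk.reverse ≠ [] := by
          simpa using htkne
        set c := dr ++ tk.reverse with hc
        have hcne2 : c ≠ [] := by
          rw [hc]
          intro hnil
          rcases List.append_eq_nil_iff.mp hnil with ⟨h1, _⟩
          exact hdrne h1
        -- chain property of c
        have hsplit : tk ++ dr = l := List.take_append_drop (i+1) l
        have hchsplit : (tk ++ dr).Chain' G.Adj := by rw [hsplit]; exact hchain
        obtain ⟨hchtk, hchdr, _⟩ := List.isChain_append.mp hchsplit
        have hchtkrev : tk.reverse.Chain' G.Adj :=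
          List.isChain_reverse.mpr (hchtk.imp (fun x y h => h.symm))
        have hdrlast : dr.getLast? = some b := by
          rw [List.getLast?_eq_getElem?, hdrlen]
          rw [hdr, List.getElem?_drop]
          have hidx : i + 1 + (m - (i+1) - 1) = m - 1 := by omega
          rw [hidx, List.getElem?_eq_getElem (by rw [hlen]; omega)]
          rw [← hfb, hfget (m-1) (by omega)]
        have htkrevhead : tk.reverse.head? = some (f i) := by
          rw [List.head?_reverse, List.getLast?_eq_getElem?, htklen]
          have : i + 1 - 1 = i := by omega
          rw [this, htk]
          rw [List.getElem?_take]
          simp only [if_pos (by omega : i < i + 1)]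
          rw [List.getElem?_eq_getElem (by rw [hlen]; omega)]
          rw [← hfget i (by omega)]
        have hchc : c.Chain' G.Adj := by
          rw [hc, List.Chain', List.isChain_append]
          refine ⟨hchdr, hchtkrev, ?_⟩
          intro p hp q hq
          rw [hdrlast, Option.mem_def, Option.some_inj] at hp
          rw [htkrevhead, Option.mem_def, Option.some_inj] at hq
          rw [← hp, ← hq]
          exact hbfi
        -- c is a permutation of l
        have hperm : c.Perm l := by
          rw [hc]
          calc dr ++ tk.reverse
              _ = dr ++ tk.reverse := rfl
              _ ~ tk.reverse ++ dr := List.perm_append_comm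
              _ ~ tk ++ dr := (List.reverse_perm tk).append (List.Perm.refl dr)
              _ = l := hsplit
        have hcnodup : c.Nodup := hperm.nodup_iff.mpr hnodup
        have hcfin : c.toFinset = l.toFinset := by
          ext z; simp only [List.mem_toFinset]; exact ⟨fun h => hperm.mem_iff.mp h,
            fun h => hperm.mem_iff.mpr h⟩
        -- endpoints of c
        have hchead : c.head hcne2 = f (i+1) := by
          have h1 : c.head? = dr.head? := by
            rw [hc]; exact List.head?_append_of_ne_nil _ hdrne
          have h2 : dr.head? = some (f (i+1)) := by
            rw [List.head?_eq_getElem?, hdr, List.getElem?_drop]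
            have : i + 1 + 0 = i + 1 := by omega
            rw [this, List.getElem?_eq_getElem (by rw [hlen]; omega)]
            rw [← hfget (i+1) (by omega)]
          have h3 : c.head? = some (c.head hcne2) := List.head?_eq_head hcne2
          rw [h1, h2] at h3
          exact (Option.some_inj.mp h3).symm
        have hclast : c.getLast hcne2 = a := by
          have h1 : c.getLast? = tk.reverse.getLast? := by
            rw [hc]; exact List.getLast?_append_of_ne_nil _ htkrevne
          have h2 : tk.reverse.getLast? = some a := by
            rw [List.getLast?_reverse, List.head?_eq_getElem?, htk, List.getElem?_take]
            simp only [if_pos (by omega : 0 < i + 1)]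
            rw [List.getElem?_eq_getElem hlpos]
            rw [← hf0, hfget 0 (by omega)]
          have h3 : c.getLast? = some (c.getLast hcne2) := List.getLast?_eq_getLast hcne2
          rw [h1, h2] at h3
          exact (Option.some_inj.mp h3).symm
        refine hcyc c hcne2 hchc hcnodup hcfin ?_
        rw [hchead, hclast]
        exact hafi
      -- counting : degrees of a and b
      have hab : a ≠ b := by
        rw [← hf0, ← hfb]
        intro hcon
        have := hinj 0 (m-1) (by omega) (by omega) hcon
        omega
      have hnadj : ¬ G.Adj a b := by
        intro hadj
        refine hcyc l hne hchain hnodup rfl ?_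
        rw [← ha, ← hb]
        exact hadj.symm
      set Ja := (Finset.range m).filter (fun i => G.Adj a (f i)) with hJa
      set Jb := (Finset.range m).filter (fun i => G.Adj b (f i)) with hJb
      have hNa : G.neighborFinset a = Ja.image f := by
        ext w
        rw [SimpleGraph.mem_neighborFinset, Finset.mem_image]
        constructor
        · intro hw
          obtain ⟨i, hi, hiw⟩ := hsurj w (hHa w hw)
          exact ⟨i, Finset.mem_filter.mpr ⟨Finset.mem_range.mpr hi, by rw [hiw]; exact hw⟩, hiw⟩
        · rintro ⟨i, hi, rfl⟩
          exact (Finset.mem_filter.mp hi).2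
      have hNb : G.neighborFinset b = Jb.image f := by
        ext w
        rw [SimpleGraph.mem_neighborFinset, Finset.mem_image]
        constructor
        · intro hw
          obtain ⟨i, hi, hiw⟩ := hsurj w (hHb w hw)
          exact ⟨i, Finset.mem_filter.mpr ⟨Finset.mem_range.mpr hi, by rw [hiw]; exact hw⟩, hiw⟩
        · rintro ⟨i, hi, rfl⟩
          exact (Finset.mem_filter.mp hi).2
      have hdega : G.degree a = Ja.card := by
        rw [← SimpleGraph.card_neighborFinset_eq_degree, hNa]
        apply Finset.card_image_of_injOn
        intro i hi j hj hij
        exact hinj i j (Finset.mem_range.mp (Finset.mem_filter.mp hi).1)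
          (Finset.mem_range.mp (Finset.mem_filter.mp hj).1) hij
      have hJamem : ∀ j ∈ Ja, 1 ≤ j ∧ j < m := by
        intro j hj
        obtain ⟨hj1, hj2⟩ := Finset.mem_filter.mp hj
        refine ⟨?_, Finset.mem_range.mp hj1⟩
        by_contra hj0
        have : j = 0 := by omega
        rw [this, hf0] at hj2
        exact G.irrefl hj2
      set Ja' := Ja.image (· - 1) with hJa'
      have hJa'card : Ja'.card = Ja.card := by
        apply Finset.card_image_of_injOn
        intro i hi j hj hij
        have h1 := hJamem i hi
        have h2 := hJamem j hj
        have hij' : i - 1 = j - 1 := hij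
        omega
      have hJa'mem : ∀ i ∈ Ja', i < m - 1 ∧ G.Adj a (f (i+1)) := by
        intro i hi
        obtain ⟨j, hj, rfl⟩ := Finset.mem_image.mp hi
        obtain ⟨hj1, hj2⟩ := hJamem j hj
        have : j - 1 + 1 = j := by omega
        rw [this]
        exact ⟨by omega, (Finset.mem_filter.mp hj).2⟩
      set A' := Ja'.image f with hA'
      have hA'card : A'.card = Ja'.card := by
        apply Finset.card_image_of_injOn
        intro i hi j hj hij
        exact hinj i j (by have := hJa'mem i hi; omega) (by have := hJa'mem j hj; omega) hij
      have hdisj : Disjoint A' (G.neighborFinset b) := by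
        rw [Finset.disjoint_left]
        intro z hzA hzB
        obtain ⟨i, hi, rfl⟩ := Finset.mem_image.mp hzA
        obtain ⟨hi1, hi2⟩ := hJa'mem i hi
        rw [SimpleGraph.mem_neighborFinset] at hzB
        exact hcross i (by omega) hzB hi2
      have hsub : A' ∪ G.neighborFinset b ⊆ l.toFinset.erase b := by
        intro z hz
        rcases Finset.mem_union.mp hz with hzA | hzB
        · obtain ⟨i, hi, rfl⟩ := Finset.mem_image.mp hzA
          obtain ⟨hi1, _⟩ := hJa'mem i hi
          refine Finset.mem_erase.mpr ⟨?_, hmemf i (by omega)⟩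
          rw [← hfb]
          intro hcon
          have := hinj i (m-1) (by omega) (by omega) hcon
          omega
        · rw [SimpleGraph.mem_neighborFinset] at hzB
          exact Finset.mem_erase.mpr ⟨hzB.ne', hHb z hzB⟩
      have hcount : G.degree a + G.degree b ≤ m - 1 := by
        have h1 : (A' ∪ G.neighborFinset b).card = A'.card + (G.neighborFinset b).card :=
          Finset.card_union_of_disjoint hdisj
        have h2 : (A' ∪ G.neighborFinset b).card ≤ (l.toFinset.erase b).card :=
          Finset.card_le_card hsub
        have h3 : (l.toFinset.erase b).card = m - 1 := by
          rw [Finset.card_erase_of_mem (by rw [← hfb]; exact hmemf (m-1) (by omega)),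
            List.toFinset_card_of_nodup hnodup, hlen]
        rw [hdega, ← hJa'card, ← hA'card]
        rw [SimpleGraph.card_neighborFinset_eq_degree] at h1
        omega
      have := hdeg a b hab hnadj
      have hc1 : (G.degree a : ℤ) + G.degree b ≤ (m : ℤ) - 1 := by
        push_cast
        omega
      have : (n : ℤ) - s + 1 ≤ (m : ℤ) - 1 := le_trans this hc1
      omega
  -- build the spanning tree from the path
  obtain ⟨T, hTG, hTtree, hTchain⟩ := exists_tree_of_path hconn l hne hnodup hchain
  refine ⟨T, hTG, hTtree, ?_⟩
  have hadjT : ∀ i, i + 1 < m → T.Adj (f i) (f (i+1)) := by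
    intro i hi
    rw [hfget i (by omega), hfget (i+1) hi]
    have := List.isChain_iff_getElem.mp hTchain i (by rw [hlen]; omega)
    simpa [List.get_eq_getElem] using this
  -- leaves are endpoints or vertices off the path
  have hleaf : Finset.univ.filter (fun v : V => T.degree v = 1) ⊆
      (Finset.univ \ l.toFinset) ∪ {a, b} := by
    intro v hv
    rw [Finset.mem_filter] at hv
    by_cases hvl : v ∈ l.toFinset
    · by_cases hva : v = a
      · exact Finset.mem_union_right _ (by simp [hva])
      by_cases hvb : v = b
      · exact Finset.mem_union_right _ (by simp [hvb])
      -- internal vertex: degree ≥ 2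
      exfalso
      obtain ⟨i, hi, rfl⟩ := hsurj v hvl
      have hi0 : i ≠ 0 := by
        intro h; rw [h, hf0] at hva; exact hva rfl
      have him : i ≠ m - 1 := by
        intro h; rw [h, hfb] at hvb; exact hvb rfl
      have hi1 : i + 1 < m := by omega
      have hprev : T.Adj (f i) (f (i-1)) := by
        have := hadjT (i-1) (by omega)
        have h2 : i - 1 + 1 = i := by omega
        rw [h2] at this
        exact this.symm
      have hnext : T.Adj (f i) (f (i+1)) := hadjT i hi1
      have hpn : f (i-1) ≠ f (i+1) := by
        intro hcon
        have := hinj (i-1) (i+1) (by omega) (by omega) hcon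
        omega
      have hsub2 : ({f (i-1), f (i+1)} : Finset V) ⊆ T.neighborFinset (f i) := by
        intro z hz
        rw [SimpleGraph.mem_neighborFinset]
        rcases Finset.mem_insert.mp hz with rfl | hz'
        · exact hprev
        · rw [Finset.mem_singleton] at hz'
          rw [hz']
          exact hnext
      have h2le : 2 ≤ T.degree (f i) := by
        rw [← SimpleGraph.card_neighborFinset_eq_degree]
        calc 2 = ({f (i-1), f (i+1)} : Finset V).card := (Finset.card_pair hpn).symm
          _ ≤ _ := Finset.card_le_card hsub2
      omega
    · exact Finset.mem_union_left _ (Finset.mem_sdiff.mpr ⟨Finset.mem_univ v, hvl⟩)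
  have hcard1 : (Finset.univ \ l.toFinset).card = n - m := by
    rw [Finset.card_sdiff_of_subset (Finset.subset_univ _), Finset.card_univ, hcard,
      List.toFinset_card_of_nodup hnodup, hlen]
  have hcard2 : ({a, b} : Finset V).card ≤ 2 := by
    apply le_trans (Finset.card_insert_le a {b})
    simp
  calc (Finset.univ.filter (fun v : V => T.degree v = 1)).card
      ≤ ((Finset.univ \ l.toFinset) ∪ {a, b}).card := Finset.card_le_card hleaf
    _ ≤ (Finset.univ \ l.toFinset).card + ({a, b} : Finset V).card := Finset.card_union_le _ _
    _ ≤ (n - m) + 2 := by rw [hcard1]; omega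
    _ ≤ s := by omega
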